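/- Joyce's piecewise defined map F⁺ : ℂ³ → ℝ × ℂ is continuous on all of ℂ³ (in particular, the three defining expressions agree on the overlaps |z₁| = |z₂| ≠ 0 and match in the limit z₁ = z₂ = 0). -/

import Mathlib

open Complex

/-- Joyce's piecewise smooth map `F⁺ : ℂ³ → ℝ × ℂ`. -/
noncomputable def Fplus (z : Fin 3 → ℂ) : ℝ × ℂ :=
  (1 / 2 * (‖z 0‖ ^ 2 - ‖z 1‖ ^ 2),
    if z 0 = 0 ∧ z 1 = 0 then z 2
    else if ‖z 1‖ ≤ ‖z 0‖ then
      z 2 - (starRingEnd ℂ) (z 0) * (starRingEnd ℂ) (z 1) / (‖z 0‖ : ℂ)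
    else
      z 2 - (starRingEnd ℂ) (z 0) * (starRingEnd ℂ) (z 1) / (‖z 1‖ : ℂ))

/-- The auxiliary function: the correction term with denominator `max |a| |b|`. -/
noncomputable def Gaux (z : Fin 3 → ℂ) : ℂ :=
  (starRingEnd ℂ) (z 0) * (starRingEnd ℂ) (z 1) /
    ((max (‖z 0‖) (‖z 1‖) : ℝ) : ℂ)

lemma Gaux_norm_le (z : Fin 3 → ℂ) : ‖Gaux z‖ ≤ ‖z 0‖ := by
  unfold Gaux
  rcases le_or_gt (max (‖z 0‖) (‖z 1‖)) 0 with h0 | h0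
  · have h1 : ‖z 0‖ = 0 := le_antisymm (le_trans (le_max_left _ _) h0) (norm_nonneg _)
    have : z 0 = 0 := by simpa using h1
    simp [this]
  · rw [norm_div, norm_mul]
    have hden : ‖((max (‖z 0‖) (‖z 1‖) : ℝ) : ℂ)‖ =
        max (‖z 0‖) (‖z 1‖) := by
      rw [Complex.norm_real, Real.norm_eq_abs, abs_of_pos h0]
    rw [hden, div_le_iff₀ h0]
    have h1 : ‖(starRingEnd ℂ) (z 0)‖ = ‖z 0‖ := by
      simp
    have h2 : ‖(starRingEnd ℂ) (z 1)‖ ≤ max (‖z 0‖) (‖z 1‖) := by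
      rw [show ‖(starRingEnd ℂ) (z 1)‖ = ‖z 1‖ by simp]
      exact le_max_right _ _
    rw [h1]
    exact mul_le_mul_of_nonneg_left h2 (norm_nonneg _)

lemma Gaux_continuous : Continuous Gaux := by
  rw [continuous_iff_continuousAt]
  intro x
  by_cases hx : max (‖x 0‖) (‖x 1‖) = 0
  · -- then x 0 = 0 and x 1 = 0
    have h0 : ‖x 0‖ = 0 :=
      le_antisymm (hx ▸ le_max_left _ _) (norm_nonneg _)
    have hx0 : x 0 = 0 := by simpa using h0
    have hval : Gaux x = 0 := by simp [Gaux, hx0]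
    rw [ContinuousAt, hval]
    apply squeeze_zero_norm Gaux_norm_le
    have hc : Continuous fun z : Fin 3 → ℂ => ‖z 0‖ :=
      continuous_norm.comp (continuous_apply 0)
    have : Filter.Tendsto (fun z : Fin 3 → ℂ => ‖z 0‖) (nhds x)
        (nhds (‖x 0‖)) := hc.continuousAt
    rwa [h0] at this
  · unfold Gaux
    have hden : Continuous fun z : Fin 3 → ℂ =>
        ((max (‖z 0‖) (‖z 1‖) : ℝ) : ℂ) :=
      Complex.continuous_ofReal.comp
        ((continuous_norm.comp (continuous_apply 0)).max
          (continuous_norm.comp (continuous_apply 1)))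
    apply ContinuousAt.div
    · exact (((Complex.continuous_conj.comp (continuous_apply 0)).mul
        (Complex.continuous_conj.comp (continuous_apply 1)))).continuousAt
    · exact hden.continuousAt
    · simpa using hx

/-- Joyce's piecewise defined map `F⁺` is continuous on all of `ℂ³`. -/
theorem Fplus_continuous : Continuous Fplus := by
  have hF : Fplus = fun z => (1 / 2 * (‖z 0‖ ^ 2 - ‖z 1‖ ^ 2),
      z 2 - Gaux z) := by
    funext z
    simp only [Fplus, Gaux]
    congr 1
    by_cases h : z 0 = 0 ∧ z 1 = 0
    · rw [if_pos h]
      simp [h.1, h.2]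
    · rw [if_neg h]
      by_cases h2 : ‖z 1‖ ≤ ‖z 0‖
      · rw [if_pos h2, max_eq_left h2]
      · rw [if_neg h2, max_eq_right (le_of_not_ge h2)]
  rw [hF]
  apply Continuous.prodMk
  · exact continuous_const.mul
      (((continuous_norm.comp (continuous_apply 0)).pow 2).sub
        ((continuous_norm.comp (continuous_apply 1)).pow 2))
  · exact (continuous_apply 2).sub Gaux_continuous
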